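/- Let (Ω, F, P) be a probability space and let {I_k}_{k≥1} be independent, identically distributed random variables taking values in {0, 1} with P(I_k = 1) = p for some p ∈ (0, 1]. Let q ∈ (1/2, 1] and σ ∈ (0, 1/2). Then almost surely there exist a constant C > 0 and an index K such that for all k ≥ K one has ∑_{t=1}^{k} I_t > 0 and |(∑_{t=1}^{k} I_t)^{−q} − (k p)^{−q}| ≤ C · k^{−(1/2 + q − σ)}. -/

import Mathlib

open MeasureTheory ProbabilityTheory Real Filter

/-- Quadratic upper bound for `exp` on `[-1, 1]`. -/
lemma aux_exp_quad {x : ℝ} (hx : |x| ≤ 1) : Real.exp x ≤ 1 + x + (3 / 4) * x ^ 2 := by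
  have h := Real.exp_bound hx (n := 2) (by norm_num)
  have hs : ∑ i ∈ Finset.range 2, x ^ i / (Nat.factorial i : ℝ) = 1 + x := by
    simp [Finset.sum_range_succ, Nat.factorial]
  rw [hs] at h
  have h2 := (abs_le.mp h).2
  have h3 : |x| ^ 2 = x ^ 2 := sq_abs x
  rw [h3] at h2
  norm_num [Nat.factorial] at h2
  linarith

/-- MGF bound for a centered Bernoulli variable, for `|t| ≤ 1`. -/
lemma aux_bern_mgf {Ω : Type*} [MeasurableSpace Ω] {μ : Measure Ω} [IsProbabilityMeasure μ]
    {X : Ω → ℝ} (hval : ∀ ω, X ω = 0 ∨ X ω = 1) (hX : Measurable X)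
    {p : ℝ} (hp : 0 < p) (hp1 : p ≤ 1) (hd : μ {ω | X ω = 1} = ENNReal.ofReal p)
    {t : ℝ} (ht : |t| ≤ 1) :
    Integrable (fun ω => Real.exp (t * (X ω - p))) μ ∧
      mgf (fun ω => X ω - p) μ t ≤ Real.exp ((3 / 4) * t ^ 2) := by
  set A := {ω | X ω = 1} with hA_def
  have hA : MeasurableSet A := hX (measurableSet_singleton 1)
  set a := Real.exp (t * (1 - p)) with ha_def
  set b := Real.exp (t * (0 - p)) with hb_def
  have heq : (fun ω => Real.exp (t * (X ω - p))) =
      fun ω => A.indicator (fun _ => a - b) ω + b := by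
    funext ω
    rcases hval ω with h | h
    · have hω : ω ∉ A := by simp [hA_def, h]
      simp [Set.indicator_of_notMem hω, h, hb_def]
    · have hω : ω ∈ A := by simp [hA_def, h]
      simp [Set.indicator_of_mem hω, h, ha_def]
  have hint : Integrable (fun ω => Real.exp (t * (X ω - p))) μ := by
    rw [heq]
    exact ((integrable_const (a - b)).indicator hA).add (integrable_const b)
  have hAtoReal : (μ A).toReal = p := by rw [hd, ENNReal.toReal_ofReal hp.le]
  have hI : mgf (fun ω => X ω - p) μ t = p * a + (1 - p) * b := by
    rw [mgf]
    calc ∫ ω, Real.exp (t * (X ω - p)) ∂μ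
        = ∫ ω, (A.indicator (fun _ => a - b) ω + b) ∂μ := by rw [← heq]
      _ = (∫ ω, A.indicator (fun _ => a - b) ω ∂μ) + ∫ _, b ∂μ :=
          integral_add ((integrable_const (a - b)).indicator hA) (integrable_const b)
      _ = (μ A).toReal * (a - b) + b := by
          rw [integral_indicator_const _ hA, integral_const]
          simp [smul_eq_mul, measureReal_def]
      _ = p * a + (1 - p) * b := by rw [hAtoReal]; ring
  have h1p : (0 : ℝ) ≤ 1 - p := by linarith
  have ha : a ≤ 1 + t * (1 - p) + (3 / 4) * (t * (1 - p)) ^ 2 := by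
    apply aux_exp_quad
    rw [abs_mul]
    calc |t| * |1 - p| ≤ 1 * 1 := by
          apply mul_le_mul ht _ (abs_nonneg _) zero_le_one
          rw [abs_of_nonneg h1p]; linarith
      _ = 1 := by norm_num
  have hb : b ≤ 1 + t * (0 - p) + (3 / 4) * (t * (0 - p)) ^ 2 := by
    apply aux_exp_quad
    rw [abs_mul]
    calc |t| * |0 - p| ≤ 1 * 1 := by
          apply mul_le_mul ht _ (abs_nonneg _) zero_le_one
          rw [abs_of_nonpos (by linarith)]; linarith
      _ = 1 := by norm_num
  have hle : p * a + (1 - p) * b ≤ 1 + (3 / 4) * t ^ 2 := by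
    nlinarith [mul_le_mul_of_nonneg_left ha hp.le,
      mul_le_mul_of_nonneg_left hb h1p, sq_nonneg t,
      mul_nonneg (mul_nonneg hp.le h1p) (sq_nonneg t)]
  refine ⟨hint, ?_⟩
  rw [hI]
  exact hle.trans (by linarith [Real.add_one_le_exp ((3 / 4) * t ^ 2)])

/-- Lipschitz estimate for `x ↦ x ^ (-q)` on `[m, ∞)`. -/
lemma aux_rpow_lip {m q : ℝ} (hm : 0 < m) (hq : 0 < q) {x y : ℝ} (hx : m ≤ x) (hy : m ≤ y) :
    |x ^ (-q) - y ^ (-q)| ≤ q * m ^ (-q - 1) * |x - y| := by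
  have key := (convex_Ici m).norm_image_sub_le_of_norm_hasDerivWithin_le
    (f := fun z : ℝ => z ^ (-q)) (f' := fun z => (-q) * z ^ (-q - 1))
    (fun z hz => (Real.hasDerivAt_rpow_const
      (Or.inl (ne_of_gt (lt_of_lt_of_le hm hz)))).hasDerivWithinAt)
    (C := q * m ^ (-q - 1)) ?_ hy hx
  · simpa [Real.norm_eq_abs] using key
  · intro z hz
    have hz0 : 0 < z := lt_of_lt_of_le hm hz
    rw [Real.norm_eq_abs, abs_mul, abs_neg, abs_of_pos hq,
      abs_of_pos (Real.rpow_pos_of_pos hz0 _)]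
    exact mul_le_mul_of_nonneg_left
      (Real.rpow_le_rpow_of_nonpos hm hz (by linarith)) hq.le

/-- Summability of `exp (-(c * k ^ a))`. -/
lemma aux_summable_exp {c a : ℝ} (hc : 0 < c) (ha : 0 < a) :
    Summable (fun k : ℕ => Real.exp (-(c * (k : ℝ) ^ a))) := by
  have h1 : Tendsto (fun x : ℝ => x ^ (2 / a) * Real.exp (-c * x)) atTop (nhds 0) :=
    tendsto_rpow_mul_exp_neg_mul_atTop_nhds_zero (2 / a) c hc
  have h2 : Tendsto (fun k : ℕ => (k : ℝ) ^ a) atTop atTop :=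
    (tendsto_rpow_atTop ha).comp tendsto_natCast_atTop_atTop
  have h3 : Tendsto (fun k : ℕ => ((k : ℝ) ^ a) ^ (2 / a) * Real.exp (-c * (k : ℝ) ^ a))
      atTop (nhds 0) := h1.comp h2
  have h4 : ∀ᶠ k : ℕ in atTop,
      ((k : ℝ) ^ a) ^ (2 / a) * Real.exp (-c * (k : ℝ) ^ a) ≤ 1 :=
    h3.eventually_le_const one_pos
  have h5 : ∀ᶠ k : ℕ in atTop,
      ‖Real.exp (-(c * (k : ℝ) ^ a))‖ ≤ 1 * ‖(k : ℝ) ^ (-2 : ℝ)‖ := by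
    filter_upwards [h4, eventually_ge_atTop 1] with k hk hk1
    have hk0 : (0 : ℝ) < (k : ℝ) := by exact_mod_cast hk1
    have hrw : ((k : ℝ) ^ a) ^ (2 / a) = (k : ℝ) ^ (2 : ℝ) := by
      rw [← Real.rpow_mul hk0.le]
      congr 1
      field_simp
    rw [hrw] at hk
    have hpos : (0 : ℝ) < (k : ℝ) ^ (2 : ℝ) := Real.rpow_pos_of_pos hk0 _
    rw [Real.norm_eq_abs, Real.norm_eq_abs, abs_of_pos (Real.exp_pos _),
      abs_of_pos (Real.rpow_pos_of_pos hk0 _), one_mul]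
    rw [Real.rpow_neg hk0.le, le_inv_comm₀ (Real.exp_pos _) hpos]
    · calc (k : ℝ) ^ (2 : ℝ) ≤ (Real.exp (-(c * (k : ℝ) ^ a)))⁻¹ *
            ((k : ℝ) ^ (2 : ℝ) * Real.exp (-(c * (k : ℝ) ^ a))) := by
            rw [← mul_assoc]
            field_simp
            exact le_rfl
        _ ≤ (Real.exp (-(c * (k : ℝ) ^ a)))⁻¹ * 1 := by
            apply mul_le_mul_of_nonneg_left _ (by positivity)
            simpa [neg_mul, mul_comm] using hk
        _ = (Real.exp (-(c * (k : ℝ) ^ a)))⁻¹ := mul_one _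
  exact summable_of_isBigO_nat (Real.summable_nat_rpow.mpr (by norm_num))
    (Asymptotics.IsBigO.of_bound 1 h5)

set_option maxHeartbeats 1000000 in
/-- Lemma 4(b): the deviation of the random step-size `1/Γ_k^q` from the
deterministic step-size `1/(kp)^q` is almost surely `O(k^{-(1/2+q-σ)})`. -/
theorem stmt_15 {Ω : Type*} [MeasurableSpace Ω] (μ : Measure Ω)
    [IsProbabilityMeasure μ]
    (I : ℕ → Ω → ℝ)
    (hval : ∀ k ω, I k ω = 0 ∨ I k ω = 1)
    (hmeas : ∀ k, Measurable (I k))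
    (hindep : iIndepFun I μ)
    (p : ℝ) (hp : 0 < p) (hp1 : p ≤ 1)
    (hdist : ∀ k, μ {ω | I k ω = 1} = ENNReal.ofReal p)
    (q : ℝ) (hq : 1 / 2 < q) (hq1 : q ≤ 1)
    (σ : ℝ) (hσ0 : 0 < σ) (hσ : σ < 1 / 2) :
    ∀ᵐ ω ∂μ, ∃ C : ℝ, 0 < C ∧ ∃ K : ℕ, ∀ k ≥ K,
      (0 < ∑ t ∈ Finset.Icc 1 k, I t ω) ∧
        |(∑ t ∈ Finset.Icc 1 k, I t ω) ^ (-q) - ((k : ℝ) * p) ^ (-q)|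
          ≤ C * (k : ℝ) ^ (-(1 / 2 + q - σ)) := by
  classical
  set Y : ℕ → Ω → ℝ := fun i ω => I i ω - p with hY_def
  have hYmeas : ∀ i, Measurable (Y i) := fun i => (hmeas i).sub measurable_const
  have hYindep : iIndepFun Y μ :=
    hindep.comp (fun _ => fun x : ℝ => x - p) (fun _ => measurable_id.sub measurable_const)
  -- pointwise identity for the sum
  have hSeq : ∀ k : ℕ, ∀ ω, (∑ i ∈ Finset.Icc 1 k, Y i) ω
      = (∑ t ∈ Finset.Icc 1 k, I t ω) - (k : ℝ) * p := by
    intro k ω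
    rw [Finset.sum_apply]
    simp only [hY_def]
    rw [Finset.sum_sub_distrib, Finset.sum_const, Nat.card_Icc]
    simp
  -- Chernoff bound
  have key : ∀ k : ℕ, 1 ≤ k →
      μ {ω | (k : ℝ) ^ ((1 : ℝ) / 2 + σ) ≤ |(∑ t ∈ Finset.Icc 1 k, I t ω) - (k : ℝ) * p|}
        ≤ ENNReal.ofReal (2 * Real.exp (-((1 / 3) * (k : ℝ) ^ (2 * σ)))) := by
    intro k hk
    have hk1 : (1 : ℝ) ≤ (k : ℝ) := by exact_mod_cast hk
    have hk0 : (0 : ℝ) < (k : ℝ) := by linarith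
    set t₀ : ℝ := (2 / 3) * (k : ℝ) ^ (σ - 1 / 2) with ht₀_def
    have ht₀pos : 0 < t₀ := by positivity
    have ht₀le : t₀ ≤ 1 := by
      have := Real.rpow_le_one_of_one_le_of_nonpos hk1 (by linarith : σ - 1 / 2 ≤ 0)
      linarith
    have habs : |t₀| ≤ 1 := by rw [abs_of_pos ht₀pos]; exact ht₀le
    have habs' : |(-t₀)| ≤ 1 := by rwa [abs_neg]
    set ε : ℝ := (k : ℝ) ^ ((1 : ℝ) / 2 + σ) with hε_def
    -- per-variable facts
    have hvar : ∀ t : ℝ, |t| ≤ 1 → ∀ i : ℕ,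
        Integrable (fun ω => Real.exp (t * Y i ω)) μ ∧
          mgf (Y i) μ t ≤ Real.exp ((3 / 4) * t ^ 2) := fun t ht i =>
      aux_bern_mgf (hval i) (hmeas i) hp hp1 (hdist i) ht
    -- mgf of the sum
    have hmgf_sum : ∀ t : ℝ, |t| ≤ 1 →
        mgf (∑ i ∈ Finset.Icc 1 k, Y i) μ t ≤ Real.exp ((3 / 4) * t ^ 2 * (k : ℝ)) := by
      intro t ht
      rw [hYindep.mgf_sum hYmeas]
      calc ∏ i ∈ Finset.Icc 1 k, mgf (Y i) μ t
          ≤ ∏ _i ∈ Finset.Icc 1 k, Real.exp ((3 / 4) * t ^ 2) :=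
            Finset.prod_le_prod (fun i _ => mgf_nonneg) (fun i _ => (hvar t ht i).2)
        _ = Real.exp ((3 / 4) * t ^ 2) ^ k := by
            rw [Finset.prod_const, Nat.card_Icc]; simp
        _ = Real.exp ((3 / 4) * t ^ 2 * (k : ℝ)) := by
            rw [← Real.exp_nat_mul]; ring_nf
    have hint_sum : ∀ t : ℝ, |t| ≤ 1 →
        Integrable (fun ω => Real.exp (t * (∑ i ∈ Finset.Icc 1 k, Y i) ω)) μ := fun t ht =>
      hYindep.integrable_exp_mul_sum hYmeas (fun i _ => (hvar t ht i).1)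
    -- exponent computations
    have hexp1 : t₀ * ε = (2 / 3) * (k : ℝ) ^ (2 * σ) := by
      rw [ht₀_def, hε_def, mul_assoc, ← Real.rpow_add hk0]
      congr 2
      ring
    have hexp2 : (3 / 4) * t₀ ^ 2 * (k : ℝ) = (1 / 3) * (k : ℝ) ^ (2 * σ) := by
      rw [ht₀_def]
      have : ((k : ℝ) ^ (σ - 1 / 2)) ^ 2 = (k : ℝ) ^ (2 * σ - 1) := by
        rw [← Real.rpow_natCast ((k : ℝ) ^ (σ - 1 / 2)), ← Real.rpow_mul hk0.le]
        norm_num; ring_nf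
      rw [mul_pow, this]
      have h2 : (k : ℝ) ^ (2 * σ - 1) * (k : ℝ) = (k : ℝ) ^ (2 * σ) := by
        nth_rewrite 2 [← Real.rpow_one (k : ℝ)]
        rw [← Real.rpow_add hk0]; ring_nf
      calc (3 / 4) * ((2 / 3) ^ 2 * (k : ℝ) ^ (2 * σ - 1)) * (k : ℝ)
          = (1 / 3) * ((k : ℝ) ^ (2 * σ - 1) * (k : ℝ)) := by ring
        _ = (1 / 3) * (k : ℝ) ^ (2 * σ) := by rw [h2]
    have hbound : Real.exp (-t₀ * ε) * Real.exp ((3 / 4) * t₀ ^ 2 * (k : ℝ))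
        = Real.exp (-((1 / 3) * (k : ℝ) ^ (2 * σ))) := by
      rw [← Real.exp_add, hexp2]
      congr 1
      rw [neg_mul, hexp1]
      ring
    -- upper tail
    have hup : μ {ω | ε ≤ (∑ i ∈ Finset.Icc 1 k, Y i) ω}
        ≤ ENNReal.ofReal (Real.exp (-((1 / 3) * (k : ℝ) ^ (2 * σ)))) := by
      rw [ENNReal.le_ofReal_iff_toReal_le (measure_ne_top μ _) (Real.exp_pos _).le]
      calc (μ {ω | ε ≤ (∑ i ∈ Finset.Icc 1 k, Y i) ω}).toReal
          ≤ Real.exp (-t₀ * ε) * mgf (∑ i ∈ Finset.Icc 1 k, Y i) μ t₀ :=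
            measure_ge_le_exp_mul_mgf ε ht₀pos.le (hint_sum t₀ habs)
        _ ≤ Real.exp (-t₀ * ε) * Real.exp ((3 / 4) * t₀ ^ 2 * (k : ℝ)) :=
            mul_le_mul_of_nonneg_left (hmgf_sum t₀ habs) (Real.exp_pos _).le
        _ = _ := hbound
    -- lower tail
    have hlo : μ {ω | (∑ i ∈ Finset.Icc 1 k, Y i) ω ≤ -ε}
        ≤ ENNReal.ofReal (Real.exp (-((1 / 3) * (k : ℝ) ^ (2 * σ)))) := by
      rw [ENNReal.le_ofReal_iff_toReal_le (measure_ne_top μ _) (Real.exp_pos _).le]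
      calc (μ {ω | (∑ i ∈ Finset.Icc 1 k, Y i) ω ≤ -ε}).toReal
          ≤ Real.exp (-(-t₀) * (-ε)) * mgf (∑ i ∈ Finset.Icc 1 k, Y i) μ (-t₀) :=
            measure_le_le_exp_mul_mgf (-ε) (by linarith) (hint_sum (-t₀) habs')
        _ ≤ Real.exp (-t₀ * ε) * Real.exp ((3 / 4) * (-t₀) ^ 2 * (k : ℝ)) := by
            rw [show -(-t₀) * (-ε) = -t₀ * ε by ring]
            exact mul_le_mul_of_nonneg_left (hmgf_sum (-t₀) habs') (Real.exp_pos _).le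
        _ = _ := by rw [show ((-t₀) ^ 2 : ℝ) = t₀ ^ 2 by ring]; exact hbound
    -- combine
    calc μ {ω | ε ≤ |(∑ t ∈ Finset.Icc 1 k, I t ω) - (k : ℝ) * p|}
        ≤ μ ({ω | ε ≤ (∑ i ∈ Finset.Icc 1 k, Y i) ω}
            ∪ {ω | (∑ i ∈ Finset.Icc 1 k, Y i) ω ≤ -ε}) := by
          apply measure_mono
          intro ω hω
          simp only [Set.mem_setOf_eq] at hω
          rcases le_abs.mp hω with h | h
          · left; simp only [Set.mem_setOf_eq, hSeq k ω]; exact h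
          · right; simp only [Set.mem_setOf_eq, hSeq k ω]; linarith
      _ ≤ μ {ω | ε ≤ (∑ i ∈ Finset.Icc 1 k, Y i) ω}
            + μ {ω | (∑ i ∈ Finset.Icc 1 k, Y i) ω ≤ -ε} := measure_union_le _ _
      _ ≤ ENNReal.ofReal (Real.exp (-((1 / 3) * (k : ℝ) ^ (2 * σ))))
            + ENNReal.ofReal (Real.exp (-((1 / 3) * (k : ℝ) ^ (2 * σ)))) := add_le_add hup hlo
      _ = ENNReal.ofReal (2 * Real.exp (-((1 / 3) * (k : ℝ) ^ (2 * σ)))) := by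
          rw [← ENNReal.ofReal_add (Real.exp_pos _).le (Real.exp_pos _).le]
          congr 1; ring
  -- Borel–Cantelli
  set s : ℕ → Set Ω := fun n =>
    {ω | ((n + 1 : ℕ) : ℝ) ^ ((1 : ℝ) / 2 + σ)
        ≤ |(∑ t ∈ Finset.Icc 1 (n + 1), I t ω) - ((n + 1 : ℕ) : ℝ) * p|} with hs_def
  have hg_sum : Summable (fun n : ℕ => 2 * Real.exp (-((1 / 3) * ((n + 1 : ℕ) : ℝ) ^ (2 * σ)))) := by
    have := (aux_summable_exp (by norm_num : (0:ℝ) < 1/3) (by linarith : (0:ℝ) < 2 * σ)).mul_left 2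
    exact ((summable_nat_add_iff 1).mpr this)
  have htsum : (∑' n, μ (s n)) ≠ ⊤ := by
    apply ne_top_of_le_ne_top _ (ENNReal.tsum_le_tsum (fun n => key (n + 1) (Nat.le_add_left 1 n)))
    rw [← ENNReal.ofReal_tsum_of_nonneg (fun n => by positivity) hg_sum]
    exact ENNReal.ofReal_ne_top
  -- deterministic eventual bound : 2 ε_k ≤ k p
  have hdet : ∀ᶠ k : ℕ in atTop, 2 * (k : ℝ) ^ ((1 : ℝ) / 2 + σ) ≤ (k : ℝ) * p := by
    have h2 : Tendsto (fun k : ℕ => (k : ℝ) ^ ((1 : ℝ) / 2 - σ)) atTop atTop :=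
      (tendsto_rpow_atTop (by linarith)).comp tendsto_natCast_atTop_atTop
    filter_upwards [h2.eventually_ge_atTop (2 / p), eventually_ge_atTop 1] with k hk hk1
    have hk0 : (0 : ℝ) < (k : ℝ) := by exact_mod_cast hk1
    have h3 : 2 ≤ p * (k : ℝ) ^ ((1 : ℝ) / 2 - σ) := by
      rw [div_le_iff₀ hp] at hk
      linarith
    have h4 : (k : ℝ) ^ ((1 : ℝ) / 2 - σ) * (k : ℝ) ^ ((1 : ℝ) / 2 + σ) = (k : ℝ) := by
      rw [← Real.rpow_add hk0]
      norm_num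
    calc 2 * (k : ℝ) ^ ((1 : ℝ) / 2 + σ)
        ≤ (p * (k : ℝ) ^ ((1 : ℝ) / 2 - σ)) * (k : ℝ) ^ ((1 : ℝ) / 2 + σ) :=
          mul_le_mul_of_nonneg_right h3 (Real.rpow_nonneg hk0.le _)
      _ = (k : ℝ) * p := by rw [mul_assoc, h4]; ring
  filter_upwards [ae_eventually_notMem htsum] with ω hω
  refine ⟨q * (p / 2) ^ (-q - 1), by positivity, ?_⟩
  -- convert the shifted eventuality
  have hω' : ∀ᶠ k : ℕ in atTop,
      ¬ ((k : ℝ) ^ ((1 : ℝ) / 2 + σ) ≤ |(∑ t ∈ Finset.Icc 1 k, I t ω) - (k : ℝ) * p|) := by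
    obtain ⟨N, hN⟩ := eventually_atTop.mp hω
    rw [eventually_atTop]
    refine ⟨N + 1, fun k hk => ?_⟩
    have hk1 : 1 ≤ k := le_trans (Nat.le_add_left 1 N) hk
    have : k - 1 + 1 = k := Nat.succ_pred_eq_of_pos hk1
    have h := hN (k - 1) (by omega)
    rw [hs_def] at h
    simp only [Set.mem_setOf_eq, this] at h
    exact h
  have hev : ∀ᶠ k : ℕ in atTop, 1 ≤ k ∧
      |(∑ t ∈ Finset.Icc 1 k, I t ω) - (k : ℝ) * p| ≤ (k : ℝ) ^ ((1 : ℝ) / 2 + σ) ∧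
      2 * (k : ℝ) ^ ((1 : ℝ) / 2 + σ) ≤ (k : ℝ) * p := by
    filter_upwards [hω', hdet, eventually_ge_atTop 1] with k h1 h2 h3
    exact ⟨h3, (not_le.mp h1).le, h2⟩
  obtain ⟨K, hK⟩ := eventually_atTop.mp hev
  refine ⟨K, fun k hk => ?_⟩
  obtain ⟨hk1, hS, h2ε⟩ := hK k hk
  have hk0 : (0 : ℝ) < (k : ℝ) := by exact_mod_cast hk1
  have hkp : (0 : ℝ) < (k : ℝ) * p := by positivity
  set Γ : ℝ := ∑ t ∈ Finset.Icc 1 k, I t ω with hΓ_def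
  set ε : ℝ := (k : ℝ) ^ ((1 : ℝ) / 2 + σ) with hε_def
  have hεpos : 0 < ε := Real.rpow_pos_of_pos hk0 _
  have hΓlb : (k : ℝ) * p / 2 ≤ Γ := by
    have := (abs_le.mp hS).1
    linarith
  have hm : (0 : ℝ) < (k : ℝ) * p / 2 := by positivity
  constructor
  · exact lt_of_lt_of_le hm hΓlb
  · have hlip := aux_rpow_lip hm (by linarith : (0:ℝ) < q) hΓlb
      (by linarith : (k : ℝ) * p / 2 ≤ (k : ℝ) * p)
    have hmrw : ((k : ℝ) * p / 2) ^ (-q - 1) = (k : ℝ) ^ (-q - 1) * (p / 2) ^ (-q - 1) := by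
      rw [show (k : ℝ) * p / 2 = (k : ℝ) * (p / 2) by ring,
        Real.mul_rpow hk0.le (by positivity)]
    have hfin : q * ((k : ℝ) * p / 2) ^ (-q - 1) * ε
        = (q * (p / 2) ^ (-q - 1)) * (k : ℝ) ^ (-(1 / 2 + q - σ)) := by
      rw [hmrw, hε_def]
      rw [show q * ((k : ℝ) ^ (-q - 1) * (p / 2) ^ (-q - 1)) * (k : ℝ) ^ ((1:ℝ)/2 + σ)
          = (q * (p / 2) ^ (-q - 1)) * ((k : ℝ) ^ (-q - 1) * (k : ℝ) ^ ((1:ℝ)/2 + σ)) by ring]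
      rw [← Real.rpow_add hk0]
      congr 2
      ring
    calc |Γ ^ (-q) - ((k : ℝ) * p) ^ (-q)|
        ≤ q * ((k : ℝ) * p / 2) ^ (-q - 1) * |Γ - (k : ℝ) * p| := hlip
      _ ≤ q * ((k : ℝ) * p / 2) ^ (-q - 1) * ε := by
          apply mul_le_mul_of_nonneg_left hS
          positivity
      _ = (q * (p / 2) ^ (-q - 1)) * (k : ℝ) ^ (-(1 / 2 + q - σ)) := hfin
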